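/- Fix integers n ≥ 3 and 1 ≤ j ≤ n. Let H be the graph on 2n+1 vertices consisting of two disjoint copies of the complete graph K_n together with one additional vertex w adjacent to exactly j fixed vertices in each of the two copies. Then the characteristic polynomial of the adjacency matrix of H equals (x+1)^{2n−3} (x−(n−1)) Q_{n,j}(x), where Q_{n,j}(x) = x(x+1)(x−(n−1)) − 2j(x−(n−1−j)). -/

import Mathlib

open Matrix Polynomial

/-- The real adjacency matrix of a finite simple graph. -/
noncomputable def SimpleGraph.adjMat {V : Type*} [Fintype V] (G : SimpleGraph V) :
    Matrix V V ℝ :=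
  letI := Classical.decRel G.Adj
  G.adjMatrix ℝ

/-- The multiset of eigenvalues of the adjacency matrix, counted with multiplicity
(the roots of the characteristic polynomial). -/
noncomputable def SimpleGraph.eigMultiset {V : Type*} [Fintype V] [DecidableEq V]
    (G : SimpleGraph V) : Multiset ℝ :=
  G.adjMat.charpoly.roots

/-- The multiset of nonzero singular values of a graph, counted with multiplicity:
the nonzero absolute values of the eigenvalues of its adjacency matrix. -/
noncomputable def SimpleGraph.nzSingVals {V : Type*} [Fintype V] [DecidableEq V]
    (G : SimpleGraph V) : Multiset ℝ :=
  (G.eigMultiset.map (fun x => |x|)).filter (fun x => x ≠ 0)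

/-- Two graphs are singularly cospectral if their multisets of nonzero singular
values (with multiplicities) coincide. -/
def SingularlyCospectral {V W : Type*} [Fintype V] [DecidableEq V] [Fintype W] [DecidableEq W]
    (G : SimpleGraph V) (H : SimpleGraph W) : Prop :=
  G.nzSingVals = H.nzSingVals

/-- Two disjoint copies of the complete graph `K_n` together with one additional vertex
(the vertex `none`) adjacent exactly to the vertices of `S₁` in the first copy and to
the vertices of `S₂` in the second copy. -/
def twoCompleteWithApex (n : ℕ) (S₁ S₂ : Finset (Fin n)) :
    SimpleGraph (Option (Fin n ⊕ Fin n)) where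
  Adj x y := x ≠ y ∧
    ((∃ a b : Fin n, x = some (Sum.inl a) ∧ y = some (Sum.inl b)) ∨
     (∃ a b : Fin n, x = some (Sum.inr a) ∧ y = some (Sum.inr b)) ∨
     (∃ a : Fin n,
       (a ∈ S₁ ∧ ((x = none ∧ y = some (Sum.inl a)) ∨ (y = none ∧ x = some (Sum.inl a)))) ∨
       (a ∈ S₂ ∧ ((x = none ∧ y = some (Sum.inr a)) ∨ (y = none ∧ x = some (Sum.inr a))))))
  symm := by
    constructor
    rintro x y ⟨hne, h⟩
    refine ⟨hne.symm, ?_⟩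
    obtain (⟨a, b, hx, hy⟩ | ⟨a, b, hx, hy⟩ | ⟨a, h⟩) := h
    · exact Or.inl ⟨b, a, hy, hx⟩
    · exact Or.inr (Or.inl ⟨b, a, hy, hx⟩)
    · exact Or.inr (Or.inr ⟨a, by tauto⟩)
  loopless := by constructor; rintro x ⟨hne, -⟩; exact hne rfl

/-- The cubic polynomial `Q_{n,j}(x) = x (x+1) (x-(n-1)) - 2 j (x-(n-1-j))`. -/
noncomputable def Qpoly (n j : ℕ) : Polynomial ℝ :=
  Polynomial.X * (Polynomial.X + 1) * (Polynomial.X - Polynomial.C ((n : ℝ) - 1)) -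
    Polynomial.C (2 * (j : ℝ)) * (Polynomial.X - Polynomial.C ((n : ℝ) - 1 - (j : ℝ)))


/-! ### Auxiliary material for the proof -/

noncomputable section CharpolyAux

/-- The all-ones matrix. -/
def Jmat (n : ℕ) : Matrix (Fin n) (Fin n) ℝ := Matrix.of fun _ _ => 1

lemma JmulJ (n : ℕ) : Jmat n * Jmat n = (n : ℝ) • Jmat n := by
  ext a b; simp [Jmat, Matrix.mul_apply]

/-- `x • 1` minus the adjacency matrix of `K_n`. -/
def Nmat (n : ℕ) (x : ℝ) : Matrix (Fin n) (Fin n) ℝ := (x + 1) • 1 - Jmat n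

/-- The inverse of `Nmat`. -/
def Ninv (n : ℕ) (x : ℝ) : Matrix (Fin n) (Fin n) ℝ :=
  (x + 1)⁻¹ • 1 + ((x + 1) * (x + 1 - n))⁻¹ • Jmat n

lemma Ninv_apply (n : ℕ) (x : ℝ) (a b : Fin n) :
    Ninv n x a b = (x + 1)⁻¹ * (if a = b then 1 else 0) + ((x + 1) * (x + 1 - n))⁻¹ := by
  by_cases h : a = b <;> simp [Ninv, Jmat, Matrix.one_apply, h]

lemma Ninv_symm (n : ℕ) (x : ℝ) (a b : Fin n) : Ninv n x a b = Ninv n x b a := by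
  rw [Ninv_apply, Ninv_apply]
  by_cases h : a = b
  · simp [h]
  · rw [if_neg h, if_neg fun hh => h hh.symm]

lemma Nmat_mul_Ninv (n : ℕ) (x : ℝ) (h1 : x + 1 ≠ 0) (h2 : x + 1 - n ≠ 0) :
    Nmat n x * Ninv n x = 1 := by
  have expand : Nmat n x * Ninv n x =
      ((x + 1) * (x + 1)⁻¹) • 1 +
        (((x + 1) * ((x + 1) * (x + 1 - n))⁻¹ - (x + 1)⁻¹) -
          ((x + 1) * (x + 1 - n))⁻¹ * n) • Jmat n := by
    simp only [Nmat, Ninv, Matrix.sub_mul, Matrix.smul_mul, Matrix.mul_smul, Matrix.mul_add,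
      Matrix.add_mul, Matrix.one_mul, Matrix.mul_one, smul_smul, JmulJ, smul_add]
    module
  rw [expand, mul_inv_cancel₀ h1]
  have : ((x + 1) * ((x + 1) * (x + 1 - n))⁻¹ - (x + 1)⁻¹) -
      ((x + 1) * (x + 1 - n))⁻¹ * n = 0 := by
    field_simp
    ring
  rw [this, one_smul, zero_smul, add_zero]

lemma det_Nmat (n : ℕ) (x : ℝ) (hn : 1 ≤ n) (h1 : x + 1 ≠ 0) :
    (Nmat n x).det = (x + 1) ^ (n - 1) * (x + 1 - n) := by
  have hN : Nmat n x = (x + 1) • (1 + Matrix.replicateCol Unit (fun _ => -(x+1)⁻¹) *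
      Matrix.replicateRow Unit (fun _ => (1:ℝ))) := by
    ext a b
    simp [Nmat, Jmat, Matrix.one_apply, Matrix.mul_apply, smul_eq_mul, mul_add]
    by_cases h : a = b <;> field_simp [h] <;> ring
  rw [hN, Matrix.det_smul, Matrix.det_one_add_replicateCol_mul_replicateRow]
  have : (fun _ : Fin n => (1:ℝ)) ⬝ᵥ (fun _ => -(x+1)⁻¹) = -(n * (x+1)⁻¹) := by
    simp [dotProduct]
  have hpow : (x + 1) ^ n = (x + 1) ^ (n - 1) * (x + 1) := by
    conv_lhs => rw [← Nat.sub_add_cancel hn]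
    rw [pow_succ]
  rw [this, Fintype.card_fin, hpow]; field_simp; ring

/-- The connection vector between the apex and the two copies of `K_n`. -/
def uvec (n : ℕ) (S₁ S₂ : Finset (Fin n)) : (Fin n ⊕ Fin n) → ℝ :=
  Sum.elim (fun a => if a ∈ S₁ then (1:ℝ) else 0) (fun a => if a ∈ S₂ then (1:ℝ) else 0)

lemma reindex_adjMat (n : ℕ) (S₁ S₂ : Finset (Fin n)) :
    Matrix.reindex (Equiv.optionEquivSumPUnit (Fin n ⊕ Fin n))
        (Equiv.optionEquivSumPUnit (Fin n ⊕ Fin n)) (twoCompleteWithApex n S₁ S₂).adjMat =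
      Matrix.fromBlocks (Matrix.fromBlocks (Jmat n - 1) 0 0 (Jmat n - 1))
        (Matrix.replicateCol PUnit (uvec n S₁ S₂)) (Matrix.replicateRow PUnit (uvec n S₁ S₂)) 0 := by
  ext p q
  have key1 : ∀ x y, (twoCompleteWithApex n S₁ S₂).Adj x y →
      (twoCompleteWithApex n S₁ S₂).adjMat x y = 1 := by
    intro x y h; unfold SimpleGraph.adjMat; simp [h]
  have key0 : ∀ x y, ¬ (twoCompleteWithApex n S₁ S₂).Adj x y →
      (twoCompleteWithApex n S₁ S₂).adjMat x y = 0 := by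
    intro x y h; unfold SimpleGraph.adjMat; simp [h]
  rcases p with (a | a) | ⟨⟨⟩⟩ <;> rcases q with (b | b) | ⟨⟨⟩⟩ <;>
    simp only [Matrix.reindex_apply, Matrix.submatrix_apply, Equiv.optionEquivSumPUnit_symm_inl,
      Equiv.optionEquivSumPUnit_symm_inr, Matrix.fromBlocks_apply₁₁,
      Matrix.fromBlocks_apply₁₂, Matrix.fromBlocks_apply₂₁, Matrix.fromBlocks_apply₂₂]
  · by_cases h : a = b
    · subst h; rw [key0 _ _ ?_]; · simp [Jmat, Matrix.one_apply]
      rintro ⟨hne, -⟩; exact hne rfl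
    · rw [key1 _ _ ⟨by simpa using h, Or.inl ⟨a, b, rfl, rfl⟩⟩]
      simp [Jmat, Matrix.one_apply, h, Matrix.sub_apply]
  · rw [key0 _ _ ?_]; · simp
    rintro ⟨-, (⟨_, _, h, h'⟩ | ⟨_, _, h, h'⟩ | ⟨c, (⟨-, (⟨h, -⟩|⟨h,-⟩)⟩ | ⟨-, (⟨h, h'⟩|⟨h,h'⟩)⟩)⟩)⟩ <;> simp_all
  · by_cases h : a ∈ S₁
    · rw [key1 _ _ ⟨by simp, Or.inr (Or.inr ⟨a, Or.inl ⟨h, Or.inr ⟨rfl, rfl⟩⟩⟩)⟩]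
      simp [uvec, h]
    · rw [key0 _ _ ?_]; · simp [uvec, h]
      rintro ⟨-, (⟨_, _, h1, h2⟩ | ⟨_, _, h1, h2⟩ | ⟨c, (⟨hc, (⟨h1, -⟩|⟨-,h2⟩)⟩ | ⟨hc, (⟨h1, -⟩|⟨-,h2⟩)⟩)⟩)⟩ <;> simp_all
  · rw [key0 _ _ ?_]; · simp
    rintro ⟨-, (⟨_, _, h, h'⟩ | ⟨_, _, h, h'⟩ | ⟨c, (⟨-, (⟨h, -⟩|⟨h,-⟩)⟩ | ⟨-, (⟨h, h'⟩|⟨h,h'⟩)⟩)⟩)⟩ <;> simp_all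
  · by_cases h : a = b
    · subst h; rw [key0 _ _ ?_]; · simp [Jmat, Matrix.one_apply]
      rintro ⟨hne, -⟩; exact hne rfl
    · rw [key1 _ _ ⟨by simpa using h, Or.inr (Or.inl ⟨a, b, rfl, rfl⟩)⟩]
      simp [Jmat, Matrix.one_apply, h, Matrix.sub_apply]
  · by_cases h : a ∈ S₂
    · rw [key1 _ _ ⟨by simp, Or.inr (Or.inr ⟨a, Or.inr ⟨h, Or.inr ⟨rfl, rfl⟩⟩⟩)⟩]
      simp [uvec, h]
    · rw [key0 _ _ ?_]; · simp [uvec, h]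
      rintro ⟨-, (⟨_, _, h1, h2⟩ | ⟨_, _, h1, h2⟩ | ⟨c, (⟨hc, (⟨h1, -⟩|⟨-,h2⟩)⟩ | ⟨hc, (⟨h1, -⟩|⟨-,h2⟩)⟩)⟩)⟩ <;> simp_all
  · by_cases h : b ∈ S₁
    · rw [key1 _ _ ⟨by simp, Or.inr (Or.inr ⟨b, Or.inl ⟨h, Or.inl ⟨rfl, rfl⟩⟩⟩)⟩]
      simp [uvec, h]
    · rw [key0 _ _ ?_]; · simp [uvec, h]
      rintro ⟨-, (⟨_, _, h1, h2⟩ | ⟨_, _, h1, h2⟩ | ⟨c, (⟨hc, (⟨-, h2⟩|⟨h1,-⟩)⟩ | ⟨hc, (⟨-, h2⟩|⟨h1,-⟩)⟩)⟩)⟩ <;> simp_all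
  · by_cases h : b ∈ S₂
    · rw [key1 _ _ ⟨by simp, Or.inr (Or.inr ⟨b, Or.inr ⟨h, Or.inl ⟨rfl, rfl⟩⟩⟩)⟩]
      simp [uvec, h]
    · rw [key0 _ _ ?_]; · simp [uvec, h]
      rintro ⟨-, (⟨_, _, h1, h2⟩ | ⟨_, _, h1, h2⟩ | ⟨c, (⟨hc, (⟨-, h2⟩|⟨h1,-⟩)⟩ | ⟨hc, (⟨-, h2⟩|⟨h1,-⟩)⟩)⟩)⟩ <;> simp_all
  · rw [key0 _ _ ?_]; · simp
    rintro ⟨hne, -⟩; exact hne rfl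

lemma eval_charpoly_real {m : Type*} [Fintype m] [DecidableEq m] (M : Matrix m m ℝ) (x : ℝ) :
    M.charpoly.eval x = (x • (1 : Matrix m m ℝ) - M).det := by
  rw [Matrix.charpoly, ← Polynomial.coe_evalRingHom, RingHom.map_det]
  congr 1
  ext i k
  by_cases h : i = k <;>
    simp [h, Matrix.charmatrix_apply, Matrix.one_apply, Matrix.diagonal_apply]

lemma quad_sum (n j : ℕ) (x : ℝ) (S : Finset (Fin n)) (hS : S.card = j) :
    (∑ a : Fin n, ∑ b : Fin n,
        (if a ∈ S then (1:ℝ) else 0) * Ninv n x a b * (if b ∈ S then (1:ℝ) else 0)) =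
      (x + 1)⁻¹ * j + ((x + 1) * (x + 1 - n))⁻¹ * j ^ 2 := by
  set w : Fin n → ℝ := fun a => if a ∈ S then (1:ℝ) else 0 with hw
  have hsum : (∑ a : Fin n, w a) = j := by
    rw [hw, Finset.sum_ite_mem, Finset.univ_inter]; simp [hS]
  have hinner : ∀ a : Fin n, (∑ b : Fin n, w a * Ninv n x a b * w b) =
      (x + 1)⁻¹ * w a + ((x + 1) * (x + 1 - n))⁻¹ * (w a * j) := by
    intro a
    have hterm : ∀ b : Fin n, w a * Ninv n x a b * w b =
        (x + 1)⁻¹ * (if a = b then w a else 0) +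
          ((x + 1) * (x + 1 - n))⁻¹ * (w a * w b) := by
      intro b; rw [Ninv_apply]
      by_cases h : a = b
      · subst h
        have hww : w a * w a = w a := by rw [hw]; by_cases h' : a ∈ S <;> simp [h']
        simp only [eq_self_iff_true, if_true, mul_one]
        linear_combination ((x + 1)⁻¹) * hww
      · simp only [if_neg h]
        ring
    rw [Finset.sum_congr rfl fun b _ => hterm b, Finset.sum_add_distrib]
    congr 1
    · rw [← Finset.mul_sum, Finset.sum_ite_eq, if_pos (Finset.mem_univ a)]
    · rw [← Finset.mul_sum, ← Finset.mul_sum, hsum]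
  rw [Finset.sum_congr rfl fun a _ => hinner a, Finset.sum_add_distrib,
    ← Finset.mul_sum, ← Finset.mul_sum, hsum]
  have h2 : (∑ a : Fin n, w a * (j:ℝ)) = (j:ℝ) * j := by
    rw [← Finset.sum_mul, hsum]
  rw [h2]; ring

end CharpolyAux


/-- Let `n ≥ 3` and `1 ≤ j ≤ n`, and let `H` be two disjoint copies of `K_n` together
with one additional vertex adjacent to exactly `j` fixed vertices in each copy.  Then
the characteristic polynomial of the adjacency matrix of `H` equals
`(x+1)^(2n-3) (x-(n-1)) Q_{n,j}(x)`. -/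

theorem charpoly_twoCompleteWithApex (n j : ℕ) (hn : 3 ≤ n) (hj1 : 1 ≤ j) (hjn : j ≤ n)
    (S₁ S₂ : Finset (Fin n)) (hS₁ : S₁.card = j) (hS₂ : S₂.card = j) :
    (twoCompleteWithApex n S₁ S₂).adjMat.charpoly =
      (Polynomial.X + 1) ^ (2 * n - 3) * (Polynomial.X - Polynomial.C ((n : ℝ) - 1)) *
        Qpoly n j := by
  classical
  refine Polynomial.eq_of_infinite_eval_eq _ _ (((Set.Ioi_infinite ((n:ℝ)))).mono ?_)
  intro x hx
  have hxn : (n : ℝ) < x := hx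
  have hn0 : (0:ℝ) < n := by positivity
  have h1 : x + 1 ≠ 0 := by nlinarith
  have h2 : x + 1 - n ≠ 0 := by intro h; nlinarith
  show _ = _
  -- LHS: evaluate charpoly as a determinant
  rw [eval_charpoly_real]
  set e : Option (Fin n ⊕ Fin n) ≃ (Fin n ⊕ Fin n) ⊕ PUnit.{1} := Equiv.optionEquivSumPUnit (Fin n ⊕ Fin n)
  set A := (twoCompleteWithApex n S₁ S₂).adjMat with hA
  have hre : (x • (1 : Matrix (Option (Fin n ⊕ Fin n)) _ ℝ) - A).det =
      (x • (1 : Matrix ((Fin n ⊕ Fin n) ⊕ PUnit.{1}) _ ℝ) - Matrix.reindex e e A).det := by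
    rw [← Matrix.det_reindex_self e (x • 1 - A)]
    congr 1
    ext p q
    by_cases h : p = q <;>
      simp [Matrix.reindex_apply, Matrix.submatrix_apply, Matrix.one_apply, h,
        e.symm.injective.eq_iff]
  rw [hre, reindex_adjMat]
  set u := uvec n S₁ S₂
  have hblock : (x • (1 : Matrix ((Fin n ⊕ Fin n) ⊕ PUnit.{1}) _ ℝ) -
      Matrix.fromBlocks (Matrix.fromBlocks (Jmat n - 1) 0 0 (Jmat n - 1))
        (Matrix.replicateCol PUnit.{1} u) (Matrix.replicateRow PUnit.{1} u) 0) =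
      Matrix.fromBlocks (Matrix.fromBlocks (Nmat n x) 0 0 (Nmat n x))
        (-(Matrix.replicateCol PUnit.{1} u)) (-(Matrix.replicateRow PUnit.{1} u)) (x • 1) := by
    ext p q
    rcases p with (p | p) | p <;> rcases q with (q | q) | q <;>
      by_cases h : p = q <;>
      simp [Matrix.fromBlocks, Matrix.one_apply, Nmat, Jmat, Matrix.one_apply, h,
        Sum.inl.injEq, Sum.inr.injEq, sub_eq_iff_eq_add] <;> ring
  rw [hblock]
  -- Invertibility of the top-left block
  have hNI : Nmat n x * Ninv n x = 1 := Nmat_mul_Ninv n x h1 h2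
  have hIN : Ninv n x * Nmat n x = 1 := mul_eq_one_comm.mp hNI
  set Mbig := Matrix.fromBlocks (Nmat n x) (0 : Matrix (Fin n) (Fin n) ℝ) 0 (Nmat n x) with hMbig
  set Minv := Matrix.fromBlocks (Ninv n x) (0 : Matrix (Fin n) (Fin n) ℝ) 0 (Ninv n x) with hMinv
  have hMI : Mbig * Minv = 1 := by
    rw [hMbig, hMinv, Matrix.fromBlocks_multiply]
    simp [hNI, Matrix.fromBlocks_one]
  have hIM : Minv * Mbig = 1 := by
    rw [hMbig, hMinv, Matrix.fromBlocks_multiply]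
    simp [hIN, Matrix.fromBlocks_one]
  letI : Invertible Mbig := ⟨Minv, hIM, hMI⟩
  rw [Matrix.det_fromBlocks₁₁]
  have hinvOf : (⅟ Mbig : Matrix _ _ ℝ) = Minv := rfl
  rw [hinvOf]
  -- determinant of the block-diagonal part
  have hdetM : Mbig.det = ((x + 1) ^ (n - 1) * (x + 1 - n)) ^ 2 := by
    rw [hMbig, Matrix.det_fromBlocks_zero₁₂, det_Nmat n x (by omega) h1]
    ring
  -- the Schur complement entry
  have hschur : (x • (1 : Matrix PUnit.{1} PUnit.{1} ℝ) -
      (-(Matrix.replicateRow PUnit.{1} u)) * Minv * (-(Matrix.replicateCol PUnit.{1} u))).det =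
      x - 2 * ((x + 1)⁻¹ * j + ((x + 1) * (x + 1 - n))⁻¹ * j ^ 2) := by
    rw [Matrix.det_unique]
    have hposneg : (-(Matrix.replicateRow PUnit.{1} u)) * Minv * (-(Matrix.replicateCol PUnit.{1} u)) =
        Matrix.replicateRow PUnit.{1} u * Minv * Matrix.replicateCol PUnit.{1} u := by
      rw [Matrix.neg_mul, Matrix.neg_mul, Matrix.mul_neg, neg_neg]
    rw [hposneg]
    have hentry : ((Matrix.replicateRow PUnit.{1} u) * Minv * (Matrix.replicateCol PUnit.{1} u))
        default default =
        ∑ p : Fin n ⊕ Fin n, (∑ q : Fin n ⊕ Fin n, u q * Minv q p) * u p := by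
      simp [Matrix.mul_apply]
    rw [Matrix.sub_apply, Matrix.smul_apply, Matrix.one_apply_eq, hentry]
    have hsplit : (∑ p : Fin n ⊕ Fin n, (∑ q : Fin n ⊕ Fin n, u q * Minv q p) * u p) =
        (∑ a : Fin n, ∑ b : Fin n,
          (if a ∈ S₁ then (1:ℝ) else 0) * Ninv n x a b * (if b ∈ S₁ then (1:ℝ) else 0)) +
        (∑ a : Fin n, ∑ b : Fin n,
          (if a ∈ S₂ then (1:ℝ) else 0) * Ninv n x a b * (if b ∈ S₂ then (1:ℝ) else 0)) := by
      rw [Fintype.sum_sum_type]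
      congr 1
      · refine Finset.sum_congr rfl fun p _ => ?_
        rw [Fintype.sum_sum_type]
        simp only [hMinv, Matrix.fromBlocks_apply₁₁, Matrix.fromBlocks_apply₂₁, u, uvec,
          Sum.elim_inl, Sum.elim_inr, Matrix.zero_apply, mul_zero, Finset.sum_const_zero,
          add_zero]
        rw [Finset.sum_mul]
        refine Finset.sum_congr rfl fun q _ => ?_
        rw [Ninv_symm n x q p]
        ring
      · refine Finset.sum_congr rfl fun p _ => ?_
        rw [Fintype.sum_sum_type]
        simp only [hMinv, Matrix.fromBlocks_apply₁₂, Matrix.fromBlocks_apply₂₂, u, uvec,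
          Sum.elim_inl, Sum.elim_inr, Matrix.zero_apply, mul_zero, Finset.sum_const_zero,
          zero_add]
        rw [Finset.sum_mul]
        refine Finset.sum_congr rfl fun q _ => ?_
        rw [Ninv_symm n x q p]
        ring
    rw [hsplit, quad_sum n j x S₁ hS₁, quad_sum n j x S₂ hS₂]
    simp only [smul_eq_mul, mul_one]
    ring
  rw [hdetM, hschur]
  -- RHS evaluation
  have hrhs : Polynomial.eval x
      ((Polynomial.X + 1) ^ (2 * n - 3) * (Polynomial.X - Polynomial.C ((n : ℝ) - 1)) *
        Qpoly n j) =
      (x + 1) ^ (2 * n - 3) * (x - ((n:ℝ) - 1)) *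
        (x * (x + 1) * (x - ((n:ℝ) - 1)) - 2 * j * (x - ((n:ℝ) - 1 - j))) := by
    simp [Qpoly]
  rw [hrhs]
  -- final scalar identity
  have hpowsplit : (((x + 1) ^ (n - 1)) ^ 2 : ℝ) = (x + 1) ^ (2 * n - 3) * (x + 1) := by
    rw [← pow_mul, ← pow_succ]
    congr 1
    omega
  rw [mul_pow, hpowsplit]
  have h12 : (x + 1) * (x + 1 - (n:ℝ)) ≠ 0 := mul_ne_zero h1 h2
  field_simp [h1, h2]
  ring
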